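/- Let U₀ = [2^(n−1) + 1] and P : U₀ → {0,1}^(n−1). Define iteratively: U_i is the larger of the two subsets of U_{i−1} determined by the i-th output bit of P (ties broken arbitrarily). Then for all i ∈ [n−1], all elements of U_i agree on the first i bits of P, and |U_{n−i}| ≥ 2^(i−1) + 1 (in particular |U_i| ≥ ⌈|U_{i−1}|/2⌉). Consequently there exist n distinct elements a₁,…,aₙ ∈ U₀ such that P(a_j),…,P(a_n) agree on the prefix of length j for every j ∈ [n−1], proving UPLC is total on a universe of size 2^(n−1)+1. -/

import Mathlib

/-- Totality of UPLC on a universe of size `2^(n-1)+1` via the non-adaptive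
iterated pigeonhole: for any iterative halving sequence `U`, where `U (i+1)`
is the larger part of `U i` under the `i`-th bit of `P`, all elements of `U i`
agree on the first `i` bits and `|U i| ≥ 2^(n-1-i) + 1`; consequently there
exist `n` distinct elements `a₁,…,aₙ` such that `P(a_j),…,P(a_n)` agree on the
prefix of length `j` for every `j ∈ [n-1]`. -/
theorem uplc_total (n : ℕ) (hn : 1 ≤ n)
    (P : Fin (2 ^ (n - 1) + 1) → Fin (n - 1) → Bool)
    (U : ℕ → Finset (Fin (2 ^ (n - 1) + 1)))
    (hU0 : U 0 = Finset.univ)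
    (hstep : ∀ i, ∀ hi : i < n - 1, U (i + 1) ⊆ U i ∧
      (∀ u ∈ U (i + 1), ∀ v ∈ U (i + 1), P u ⟨i, hi⟩ = P v ⟨i, hi⟩) ∧
      (U i).card ≤ 2 * (U (i + 1)).card) :
    (∀ i, i ≤ n - 1 →
      (∀ u ∈ U i, ∀ v ∈ U i, ∀ x : Fin (n - 1), (x : ℕ) < i → P u x = P v x) ∧
      2 ^ (n - 1 - i) + 1 ≤ (U i).card) ∧
    ∃ a : Fin n → Fin (2 ^ (n - 1) + 1), Function.Injective a ∧
      ∀ j : ℕ, j < n - 1 → ∀ r r' : Fin n, j ≤ (r : ℕ) → j ≤ (r' : ℕ) →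
        ∀ x : Fin (n - 1), (x : ℕ) ≤ j → P (a r) x = P (a r') x := by
  have main : ∀ i, i ≤ n - 1 →
      (∀ u ∈ U i, ∀ v ∈ U i, ∀ x : Fin (n - 1), (x : ℕ) < i → P u x = P v x) ∧
      2 ^ (n - 1 - i) + 1 ≤ (U i).card := by
    intro i
    induction i with
    | zero =>
      intro _
      refine ⟨fun u _ v _ x hx => absurd hx (Nat.not_lt_zero _), ?_⟩
      rw [hU0, Finset.card_univ, Fintype.card_fin]
      simp
    | succ i ih =>
      intro hle
      have hi : i < n - 1 := hle
      obtain ⟨hsub, hagree, hcard⟩ := hstep i hi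
      obtain ⟨ih1, ih2⟩ := ih (le_of_lt hi)
      constructor
      · intro u hu v hv x hx
        rcases Nat.lt_succ_iff_lt_or_eq.mp hx with h | h
        · exact ih1 u (hsub hu) v (hsub hv) x h
        · have hx' : x = ⟨i, hi⟩ := Fin.ext h
          rw [hx']
          exact hagree u hu v hv
      · have h2 : n - 1 - i = (n - 1 - (i + 1)) + 1 := by omega
        rw [h2, pow_succ] at ih2
        have := le_trans ih2 hcard
        omega
  have chain : ∀ i k, i ≤ k → k ≤ n - 1 → U k ⊆ U i := by
    intro i k hik hk
    induction k with
    | zero =>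
      have : i = 0 := Nat.le_zero.mp hik
      subst this; exact subset_rfl
    | succ k ihk =>
      rcases Nat.lt_succ_iff_lt_or_eq.mp (Nat.lt_succ_of_le hik) with h | h
      · exact subset_trans (hstep k (by omega)).1 (ihk (by omega) (by omega))
      · subst h; exact subset_rfl
  refine ⟨main, ?_⟩
  have build : ∀ m, m ≤ n → ∃ b : Fin m → Fin (2 ^ (n - 1) + 1),
      Function.Injective b ∧
      ∀ k : Fin m, b k ∈ U (min (n - (k : ℕ)) (n - 1)) := by
    intro m
    induction m with
    | zero => exact fun _ => ⟨Fin.elim0, fun x => x.elim0, fun k => k.elim0⟩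
    | succ m ih =>
      intro hm
      obtain ⟨b, hbinj, hbmem⟩ := ih (by omega)
      have hLle : min (n - m) (n - 1) ≤ n - 1 := min_le_right _ _
      have hcard : (Finset.image b Finset.univ).card < (U (min (n - m) (n - 1))).card := by
        have h1 : (Finset.image b Finset.univ).card ≤ m :=
          le_trans Finset.card_image_le (by simp)
        have h2 : m < (U (min (n - m) (n - 1))).card := by
          have hc := (main _ hLle).2
          have hp : 1 ≤ 2 ^ (n - 1 - min (n - m) (n - 1)) := Nat.one_le_two_pow
          rcases Nat.eq_zero_or_pos m with h | h
          · omega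
          · have hL : min (n - m) (n - 1) = n - m := by omega
            rw [hL] at hc ⊢
            have hnm : n - 1 - (n - m) = m - 1 := by omega
            rw [hnm] at hc
            have : m - 1 < 2 ^ (m - 1) := Nat.lt_two_pow_self
            omega
        omega
      obtain ⟨x, hxU, hxim⟩ := Finset.not_subset.mp
        (fun hsub => absurd (Finset.card_le_card hsub) (not_le.mpr hcard))
      refine ⟨Fin.snoc b x, ?_, ?_⟩
      · intro a1 a2 heq
        induction a1 using Fin.lastCases with
        | last =>
          induction a2 using Fin.lastCases with
          | last => rfl
          | cast j =>
            rw [Fin.snoc_last, Fin.snoc_castSucc] at heq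
            exact absurd (Finset.mem_image_of_mem b (Finset.mem_univ j))
              (heq ▸ hxim)
        | cast j =>
          induction a2 using Fin.lastCases with
          | last =>
            rw [Fin.snoc_last, Fin.snoc_castSucc] at heq
            exact absurd (Finset.mem_image_of_mem b (Finset.mem_univ j))
              (heq.symm ▸ hxim)
          | cast j' =>
            rw [Fin.snoc_castSucc, Fin.snoc_castSucc] at heq
            exact congrArg Fin.castSucc (hbinj heq)
      · intro k
        induction k using Fin.lastCases with
        | last => simpa using hxU
        | cast j => simpa using hbmem j
  obtain ⟨b, hbinj, hbmem⟩ := build n le_rfl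
  refine ⟨fun r => b ⟨n - 1 - (r : ℕ), by omega⟩, ?_, ?_⟩
  · intro r r' heq
    have := hbinj heq
    have h1 : n - 1 - (r : ℕ) = n - 1 - (r' : ℕ) := congrArg Fin.val this
    have hr := r.isLt
    have hr' := r'.isLt
    exact Fin.ext (by omega)
  · intro j hj r r' hjr hjr' x hx
    have hmem : ∀ s : Fin n, j ≤ (s : ℕ) →
        b ⟨n - 1 - (s : ℕ), by omega⟩ ∈ U ((x : ℕ) + 1) := by
      intro s hjs
      have hs := s.isLt
      have hxlt := x.isLt
      have hmem0 := hbmem ⟨n - 1 - (s : ℕ), by omega⟩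
      refine chain ((x : ℕ) + 1) _ ?_ ?_ hmem0 <;> simp only [Fin.val_mk] <;> omega
    exact (main ((x : ℕ) + 1) (by have := x.isLt; omega)).1 _ (hmem r hjr) _ (hmem r' hjr')
      x (Nat.lt_succ_self _)
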